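/- With the setup of a pre-w-NADS (A, Φ, D) and the maps d and T as above, the D-w-NAF of an element α ∈ A, if it exists, is unique up to leading zeros. -/

import Mathlib

section
variable {A : Type*} [AddCommGroup A]

lemma end_pow_succ_apply (Φ : AddMonoid.End A) (m : ℕ) (x : A) :
    (Φ ^ (m + 1)) x = Φ ((Φ ^ m) x) := by
  rw [pow_succ']; rfl

lemma end_pow_add_apply (Φ : AddMonoid.End A) (m n : ℕ) (x : A) :
    (Φ ^ (m + n)) x = (Φ ^ m) ((Φ ^ n) x) := by
  rw [pow_add]; rfl

/-- First-digit analysis of a w-NAF expansion. -/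
lemma wnaf_first_digit (Φ : AddMonoid.End A) (w : ℕ)
    (Dbul : Set A) (hDnot : ∀ δ ∈ Dbul, δ ∉ Set.range ⇑Φ)
    (η : ℕ → A) (ℓ : ℕ)
    (hηD : ∀ j, η j ∈ insert (0 : A) Dbul)
    (hηNAF : ∀ i j : ℕ, i < j → j < i + w → η i ≠ 0 → η j = 0)
    (hηfin : ∀ j, ℓ ≤ j → η j = 0)
    (α : A) (hηval : ∑ j ∈ Finset.range ℓ, (Φ ^ j) (η j) = α) :
    (α ∈ Set.range ⇑Φ → η 0 = 0) ∧
      (α ∉ Set.range ⇑Φ → η 0 ∈ Dbul ∧ α - η 0 ∈ Set.range ⇑(Φ ^ w)) := by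
  rcases Nat.eq_zero_or_pos ℓ with hℓ | hℓ
  · subst hℓ
    simp only [Finset.range_zero, Finset.sum_empty] at hηval
    have h0 : η 0 = 0 := hηfin 0 le_rfl
    have hmem : α ∈ Set.range ⇑Φ := ⟨0, by simp [← hηval]⟩
    exact ⟨fun _ => h0, fun h => absurd hmem h⟩
  · have hmem : (0 : ℕ) ∈ Finset.range ℓ := Finset.mem_range.mpr hℓ
    have hsplit : η 0 + ∑ j ∈ (Finset.range ℓ).erase 0, (Φ ^ j) (η j) = α := by
      rw [← hηval, ← Finset.add_sum_erase _ _ hmem]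
      simp
    have htail : ∑ j ∈ (Finset.range ℓ).erase 0, (Φ ^ j) (η j) ∈
        AddMonoidHom.range (Φ : A →+ A) := by
      refine AddSubgroup.sum_mem _ (fun j hj => ?_)
      have hj0 : j ≠ 0 := (Finset.mem_erase.mp hj).1
      obtain ⟨m, rfl⟩ := Nat.exists_eq_succ_of_ne_zero hj0
      exact ⟨(Φ ^ m) (η (m + 1)), (end_pow_succ_apply Φ m _).symm⟩
    obtain ⟨b, hb⟩ := htail
    constructor
    · intro hα
      by_contra h0
      have hD : η 0 ∈ Dbul := (hηD 0).resolve_left h0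
      obtain ⟨a, ha⟩ := hα
      refine hDnot _ hD ⟨a - b, ?_⟩
      rw [map_sub, ha, (show Φ b = _ from hb), ← hsplit]; abel
    · intro hα
      have h0 : η 0 ≠ 0 := by
        intro h0
        exact hα ⟨b, by rw [(show Φ b = _ from hb), ← hsplit, h0, zero_add]⟩
      have hD : η 0 ∈ Dbul := (hηD 0).resolve_left h0
      refine ⟨hD, ?_⟩
      have heq : α - η 0 = ∑ j ∈ (Finset.range ℓ).erase 0, (Φ ^ j) (η j) := by
        rw [← hsplit]; abel
      have hmem2 : ∑ j ∈ (Finset.range ℓ).erase 0, (Φ ^ j) (η j) ∈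
          AddMonoidHom.range ((Φ ^ w : AddMonoid.End A) : A →+ A) := by
        refine AddSubgroup.sum_mem _ (fun j hj => ?_)
        have hj0 : j ≠ 0 := (Finset.mem_erase.mp hj).1
        rcases lt_or_ge j w with hjw | hjw
        · have : η j = 0 := hηNAF 0 j (Nat.pos_of_ne_zero hj0) (by omega) h0
          simpa [this] using ⟨0, map_zero _⟩
        · obtain ⟨m, rfl⟩ := Nat.exists_eq_add_of_le hjw
          exact ⟨(Φ ^ m) (η (w + m)), (end_pow_add_apply Φ w m _).symm⟩
      obtain ⟨c, hc⟩ := hmem2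
      exact heq ▸ ⟨c, hc⟩

end

section
variable {A : Type*} [AddCommGroup A]

lemma wnaf_unique_aux (Φ : AddMonoid.End A) (hΦ : Function.Injective Φ) (w : ℕ)
    (Dbul : Set A)
    (hDnot : ∀ δ ∈ Dbul, δ ∉ Set.range ⇑Φ)
    (hDrep : ∀ α : A, α ∉ Set.range ⇑Φ →
      ∃! δ, δ ∈ Dbul ∧ α - δ ∈ Set.range ⇑(Φ ^ w)) :
    ∀ N : ℕ, ∀ (α : A) (η ξ : ℕ → A) (ℓ ℓ' : ℕ), ℓ ≤ N → ℓ' ≤ N →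
    (∀ j, η j ∈ insert (0 : A) Dbul) → (∀ j, ξ j ∈ insert (0 : A) Dbul) →
    (∀ i j : ℕ, i < j → j < i + w → η i ≠ 0 → η j = 0) →
    (∀ i j : ℕ, i < j → j < i + w → ξ i ≠ 0 → ξ j = 0) →
    (∀ j, ℓ ≤ j → η j = 0) → (∀ j, ℓ' ≤ j → ξ j = 0) →
    (∑ j ∈ Finset.range ℓ, (Φ ^ j) (η j) = α) →
    (∑ j ∈ Finset.range ℓ', (Φ ^ j) (ξ j) = α) → η = ξ := by
  intro N
  induction N with
  | zero =>
    intro α η ξ ℓ ℓ' hℓ hℓ' _ _ _ _ hηfin hξfin _ _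
    funext n
    rw [hηfin n (le_trans hℓ (Nat.zero_le n)), hξfin n (le_trans hℓ' (Nat.zero_le n))]
  | succ N ih =>
    intro α η ξ ℓ ℓ' hℓ hℓ' hηD hξD hηNAF hξNAF hηfin hξfin hηval hξval
    have hη := wnaf_first_digit Φ w Dbul hDnot η ℓ hηD hηNAF hηfin α hηval
    have hξ := wnaf_first_digit Φ w Dbul hDnot ξ ℓ' hξD hξNAF hξfin α hξval
    have h0 : η 0 = ξ 0 := by
      by_cases hα : α ∈ Set.range ⇑Φ
      · rw [hη.1 hα, hξ.1 hα]
      · exact (hDrep α hα).unique (hη.2 hα) (hξ.2 hα)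
    -- tail sums
    have key : ∀ (θ : ℕ → A) (m : ℕ), (∀ j, m ≤ j → θ j = 0) →
        (∑ j ∈ Finset.range m, (Φ ^ j) (θ j)) =
        θ 0 + Φ (∑ j ∈ Finset.range (m - 1), (Φ ^ j) (θ (j + 1))) := by
      intro θ m hfin
      rcases Nat.eq_zero_or_pos m with hm | hm
      · subst hm
        simp [hfin 0 le_rfl]
      · obtain ⟨k, rfl⟩ : ∃ k, m = k + 1 := ⟨m - 1, by omega⟩
        rw [Finset.sum_range_succ']
        simp only [Nat.add_sub_cancel, pow_zero, AddMonoid.End.one_apply, map_sum]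
        rw [add_comm]
        congr 1
        exact Finset.sum_congr rfl (fun j _ => end_pow_succ_apply Φ j (θ (j + 1)))
    have hS : η 0 + Φ (∑ j ∈ Finset.range (ℓ - 1), (Φ ^ j) (η (j + 1))) = α := by
      rw [← key η ℓ hηfin]; exact hηval
    have hS' : ξ 0 + Φ (∑ j ∈ Finset.range (ℓ' - 1), (Φ ^ j) (ξ (j + 1))) = α := by
      rw [← key ξ ℓ' hξfin]; exact hξval
    have hSS : (∑ j ∈ Finset.range (ℓ - 1), (Φ ^ j) (η (j + 1))) =
        (∑ j ∈ Finset.range (ℓ' - 1), (Φ ^ j) (ξ (j + 1))) := by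
      apply hΦ
      have := hS.trans hS'.symm
      rw [h0] at this
      exact add_left_cancel this
    have htails := ih (∑ j ∈ Finset.range (ℓ - 1), (Φ ^ j) (η (j + 1)))
      (fun n => η (n + 1)) (fun n => ξ (n + 1)) (ℓ - 1) (ℓ' - 1)
      (by omega) (by omega) (fun j => hηD (j + 1)) (fun j => hξD (j + 1))
      (fun i j hij hjw hne => hηNAF (i + 1) (j + 1) (by omega) (by omega) hne)
      (fun i j hij hjw hne => hξNAF (i + 1) (j + 1) (by omega) (by omega) hne)
      (fun j hj => hηfin (j + 1) (by omega)) (fun j hj => hξfin (j + 1) (by omega))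
      rfl hSS.symm
    funext n
    cases n with
    | zero => exact h0
    | succ n => exact congrFun htails n

end

/-- Uniqueness (up to leading zeros) of the `D`-`w`-NAF of an element: two
`D`-`w`-NAF expansions of the same element, written as digit sequences
`ℕ → A` with finitely many non-zero digits (so that padding by leading zeros
is built in), coincide. -/
theorem wnaf_unique {A : Type*} [AddCommGroup A] (Φ : AddMonoid.End A)
    (hΦ : Function.Injective Φ) (w : ℕ) (hw : 1 ≤ w)
    (Dbul : Set A)
    (hDnot : ∀ δ ∈ Dbul, δ ∉ Set.range ⇑Φ)
    (hDrep : ∀ α : A, α ∉ Set.range ⇑Φ →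
      ∃! δ, δ ∈ Dbul ∧ α - δ ∈ Set.range ⇑(Φ ^ w))
    (d : A → A)
    (hd0 : ∀ α ∈ Set.range ⇑Φ, d α = 0)
    (hd : ∀ α : A, α ∉ Set.range ⇑Φ → d α ∈ Dbul ∧ α - d α ∈ Set.range ⇑(Φ ^ w))
    (T : A → A) (hT : ∀ α, Φ (T α) = α - d α)
    (α : A) (η ξ : ℕ → A) (ℓ ℓ' : ℕ)
    (hηD : ∀ j, η j ∈ insert (0 : A) Dbul)
    (hξD : ∀ j, ξ j ∈ insert (0 : A) Dbul)
    (hηNAF : ∀ i j : ℕ, i < j → j < i + w → η i ≠ 0 → η j = 0)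
    (hξNAF : ∀ i j : ℕ, i < j → j < i + w → ξ i ≠ 0 → ξ j = 0)
    (hηfin : ∀ j, ℓ ≤ j → η j = 0)
    (hξfin : ∀ j, ℓ' ≤ j → ξ j = 0)
    (hηval : ∑ j ∈ Finset.range ℓ, (Φ ^ j) (η j) = α)
    (hξval : ∑ j ∈ Finset.range ℓ', (Φ ^ j) (ξ j) = α) :
    η = ξ := by
  exact wnaf_unique_aux Φ hΦ w Dbul hDnot hDrep (max ℓ ℓ') α η ξ ℓ ℓ'
    (le_max_left _ _) (le_max_right _ _) hηD hξD hηNAF hξNAF hηfin hξfin hηval hξval
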